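/- Let ψ: ℝ⁺ → ℝ⁺ be decreasing with lower order at infinity λ_ψ = liminf_{s→∞} (−log ψ(s))/(log s). Set Ψ(s) = ψ(s)^(−n/(n+1)) and r_ψ(t) = −t + log Ψ^{−1}(e^t). Then liminf_{t→∞} (−r_ψ(t))/t = (nλ_ψ − n − 1)/(nλ_ψ). -/

import Mathlib

open Real Filter

/-- Generalized inverse of `Ψ(s) = ψ(s)^{-n/(n+1)}`. -/
noncomputable def PsiInv (n : ℕ) (ψ : ℝ → ℝ) (y : ℝ) : ℝ :=
  sSup {s : ℝ | 0 < s ∧ (ψ s) ^ (-(n : ℝ) / ((n : ℝ) + 1)) ≤ y}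

/-- `r_ψ(t) = -t + log Ψ^{-1}(e^t)`. -/
noncomputable def rpsi (n : ℕ) (ψ : ℝ → ℝ) (t : ℝ) : ℝ :=
  -t + Real.log (PsiInv n ψ (Real.exp t))

/-- The lower order at infinity `λ_ψ = liminf (-log ψ(s))/(log s)` can be read off `r_ψ`:
`liminf (-r_ψ(t))/t = (nλ_ψ - n - 1)/(nλ_ψ)`. -/
theorem gamma_of_lambda (n : ℕ) (hn : 1 ≤ n) (ψ : ℝ → ℝ)
    (hψpos : ∀ s > 0, 0 < ψ s) (hψdec : StrictAntiOn ψ (Set.Ioi 0))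
    (lam : ℝ) (hlam : lam = liminf (fun s => -Real.log (ψ s) / Real.log s) atTop)
    (hlam_ge : ((n : ℝ) + 1) / n ≤ lam) :
    liminf (fun t => -(rpsi n ψ t) / t) atTop
      = ((n : ℝ) * lam - (n : ℝ) - 1) / ((n : ℝ) * lam) := by
  have hn0 : (0:ℝ) < n := by exact_mod_cast hn
  have hn1 : (0:ℝ) < (n:ℝ) + 1 := by linarith
  set c : ℝ := (n:ℝ) / ((n:ℝ) + 1) with hc_def
  have hc_pos : 0 < c := div_pos hn0 hn1
  have hlam_pos : 0 < lam := lt_of_lt_of_le (div_pos hn1 hn0) hlam_ge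
  set μ : ℝ := c * lam with hμ_def
  have hμ1 : 1 ≤ μ := by
    have : c * (((n:ℝ) + 1) / n) ≤ c * lam := by
      apply mul_le_mul_of_nonneg_left hlam_ge hc_pos.le
    have hcc : c * (((n:ℝ) + 1) / n) = 1 := by
      rw [hc_def]; field_simp
    linarith
  have hμ_pos : 0 < μ := lt_of_lt_of_le one_pos hμ1
  set f : ℝ → ℝ := fun s => -Real.log (ψ s) / Real.log s with hf_def
  set Φ : ℝ → ℝ := fun s => (ψ s) ^ (-(n : ℝ) / ((n : ℝ) + 1)) with hΦ_def
  have hPsiInv : ∀ y, PsiInv n ψ y = sSup {s : ℝ | 0 < s ∧ Φ s ≤ y} := fun y => rfl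
  have hΦpos : ∀ s, 0 < s → 0 < Φ s := fun s hs => Real.rpow_pos_of_pos (hψpos s hs) _
  have hlogΦ : ∀ s, 0 < s → Real.log (Φ s) = -c * Real.log (ψ s) := by
    intro s hs
    rw [hΦ_def]
    simp only
    rw [Real.log_rpow (hψpos s hs)]
    ring_nf
    rw [hc_def]
    ring
  -- f is eventually bounded below
  have hfbdd : IsBoundedUnder (· ≥ ·) atTop f := by
    refine ⟨min 0 (-Real.log (ψ 1)), ?_⟩
    rw [eventually_map]
    filter_upwards [eventually_ge_atTop (Real.exp 1)] with s hs
    have hs1 : 1 < s := lt_of_lt_of_le (by simpa using Real.exp_lt_exp.2 one_pos ) hs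
    have hlogs : 1 ≤ Real.log s := by
      rw [← Real.log_exp 1]
      exact Real.log_le_log (Real.exp_pos 1) hs
    have hψs : ψ s < ψ 1 := hψdec (by norm_num) (by simp; linarith) hs1
    have hx : -Real.log (ψ 1) ≤ -Real.log (ψ s) := by
      have := Real.log_le_log (hψpos s (by linarith)) hψs.le
      linarith
    have hB : min 0 (-Real.log (ψ 1)) ≤ 0 := min_le_left _ _
    have hB2 : min 0 (-Real.log (ψ 1)) ≤ -Real.log (ψ 1) := min_le_right _ _
    show min 0 (-Real.log (ψ 1)) ≤ f s
    rw [hf_def]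
    simp only
    rw [le_div_iff₀ (by linarith : (0:ℝ) < Real.log s)]
    nlinarith
  -- consequences of the liminf hypothesis
  by_cases hcb : IsCoboundedUnder (· ≥ ·) atTop f
  swap
  · exfalso
    have hnb : ¬ BddAbove {a : ℝ | ∀ᶠ x in atTop, a ≤ f x} := by
      intro ⟨b, hb⟩
      exact hcb ⟨b, fun a ha => hb ha⟩
    have hzero : lam = 0 := by
      rw [hlam, liminf_eq, Real.sSup_of_not_bddAbove hnb]
    rw [hzero] at hlam_pos
    exact lt_irrefl 0 hlam_pos
  have E1 : ∀ a, a < lam → ∀ᶠ s in atTop, a < f s := by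
    intro a ha
    exact eventually_lt_of_lt_liminf (by rw [← hlam] ; exact ha) hfbdd
  have E2 : ∀ a, lam < a → ∃ᶠ s in atTop, f s < a := by
    intro a ha
    exact frequently_lt_of_liminf_lt hcb (by rw [← hlam]; exact ha)
  -- growth of Φ
  have H1 : ∀ ε : ℝ, 0 < ε → ε < μ → ∀ᶠ s in atTop, s ^ (μ - ε) ≤ Φ s ∧ 1 < s := by
    intro ε hε hεμ
    have ha : lam - ε / c < lam := by
      have : 0 < ε / c := div_pos hε hc_pos
      linarith
    filter_upwards [E1 _ ha, eventually_gt_atTop 1] with s hfs hs1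
    refine ⟨?_, hs1⟩
    have hs0 : 0 < s := by linarith
    have hlogs : 0 < Real.log s := Real.log_pos hs1
    have h1 : (lam - ε / c) * Real.log s < -Real.log (ψ s) := by
      rw [hf_def] at hfs
      simp only at hfs
      exact (lt_div_iff₀ hlogs).1 hfs
    have h2 : (μ - ε) * Real.log s ≤ Real.log (Φ s) := by
      rw [hlogΦ s hs0]
      have hcε : c * (ε / c) = ε := by field_simp
      nlinarith
    calc s ^ (μ - ε) = Real.exp (Real.log s * (μ - ε)) := Real.rpow_def_of_pos hs0 _
      _ ≤ Real.exp (Real.log (Φ s)) := by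
          apply Real.exp_le_exp.2; linarith [h2]
      _ = Φ s := Real.exp_log (hΦpos s hs0)
  have H2 : ∀ ε : ℝ, 0 < ε → ∃ᶠ s in atTop, Φ s ≤ s ^ (μ + ε) ∧ 1 < s := by
    intro ε hε
    have ha : lam < lam + ε / c := by
      have : 0 < ε / c := div_pos hε hc_pos
      linarith
    apply ((E2 _ ha).and_eventually (eventually_gt_atTop 1)).mono
    rintro s ⟨hfs, hs1⟩
    refine ⟨?_, hs1⟩
    have hs0 : 0 < s := by linarith
    have hlogs : 0 < Real.log s := Real.log_pos hs1
    have h1 : -Real.log (ψ s) < (lam + ε / c) * Real.log s := by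
      rw [hf_def] at hfs
      simp only at hfs
      exact (div_lt_iff₀ hlogs).1 hfs
    have h2 : Real.log (Φ s) ≤ (μ + ε) * Real.log s := by
      rw [hlogΦ s hs0]
      have hcε : c * (ε / c) = ε := by field_simp
      nlinarith
    calc Φ s = Real.exp (Real.log (Φ s)) := (Real.exp_log (hΦpos s hs0)).symm
      _ ≤ Real.exp (Real.log s * (μ + ε)) := by apply Real.exp_le_exp.2; linarith
      _ = s ^ (μ + ε) := (Real.rpow_def_of_pos hs0 _).symm
  -- upper bound on elements of the set defining PsiInv
  have Abound : ∀ ε : ℝ, 0 < ε → ε < μ → ∃ S : ℝ, 1 < S ∧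
      ∀ y : ℝ, ∀ s ∈ {s : ℝ | 0 < s ∧ Φ s ≤ y}, s ≤ max S (y ^ (μ - ε)⁻¹) := by
    intro ε hε hεμ
    obtain ⟨S, hS⟩ := (H1 ε hε hεμ).exists_forall_of_atTop
    have hS1 : 1 < S := (hS S le_rfl).2
    refine ⟨S, hS1, ?_⟩
    rintro y s ⟨hs0, hsy⟩
    rcases le_or_gt s S with h | h
    · exact le_trans h (le_max_left _ _)
    · have hgrow := (hS s h.le).1
      have hyb : s ^ (μ - ε) ≤ y := le_trans hgrow hsy
      have hy0 : 0 < y := lt_of_lt_of_le (Real.rpow_pos_of_pos hs0 _) hyb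
      have : s ≤ y ^ (μ - ε)⁻¹ :=
        (Real.le_rpow_inv_iff_of_pos hs0.le hy0.le (by linarith)).2 hyb
      exact le_trans this (le_max_right _ _)
  -- a fixed instance for global bddAbove
  obtain ⟨S₀, hS₀1, hS₀⟩ := Abound (μ/2) (by linarith) (by linarith)
  have hμ2 : μ - μ/2 = μ/2 := by ring
  have hbdd : ∀ y : ℝ, BddAbove {s : ℝ | 0 < s ∧ Φ s ≤ y} := by
    intro y
    exact ⟨max S₀ (y ^ (μ - μ/2)⁻¹), fun s hs => hS₀ y s hs⟩
  -- PsiInv is eventually at least 1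
  have hge1 : ∀ y : ℝ, Φ 1 ≤ y → 1 ≤ PsiInv n ψ y := by
    intro y hy
    rw [hPsiInv]
    exact le_csSup (hbdd y) ⟨one_pos, hy⟩
  -- the target function
  set h : ℝ → ℝ := fun t => -(rpsi n ψ t) / t with hh_def
  have hh : ∀ t : ℝ, h t = (t - Real.log (PsiInv n ψ (Real.exp t))) / t := by
    intro t
    rw [hh_def]
    simp only [rpsi]
    ring_nf
  -- eventual two-sided bounds
  have Ev : ∀ ε : ℝ, 0 < ε → ε < μ →
      ∀ᶠ t in atTop, 1 - (μ - ε)⁻¹ ≤ h t ∧ h t ≤ 1 := by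
    intro ε hε hεμ
    obtain ⟨S, hS1, hS⟩ := Abound ε hε hεμ
    have hμε : 0 < μ - ε := by linarith
    filter_upwards [eventually_ge_atTop (max (max ((μ - ε) * Real.log S) 1) (Real.log (Φ 1)))]
      with t ht
    have ht1 : 1 ≤ t := le_trans (le_trans (le_max_right _ _) (le_max_left _ _)) ht
    have ht0 : 0 < t := by linarith
    have htS : (μ - ε) * Real.log S ≤ t :=
      le_trans (le_trans (le_max_left _ _) (le_max_left _ _)) ht
    have htΦ : Real.log (Φ 1) ≤ t := le_trans (le_max_right _ _) ht
    have hΦ1y : Φ 1 ≤ Real.exp t := by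
      calc Φ 1 = Real.exp (Real.log (Φ 1)) := (Real.exp_log (hΦpos 1 one_pos)).symm
        _ ≤ Real.exp t := Real.exp_le_exp.2 htΦ
    have hI1 : 1 ≤ PsiInv n ψ (Real.exp t) := hge1 _ hΦ1y
    have hlogI0 : 0 ≤ Real.log (PsiInv n ψ (Real.exp t)) := Real.log_nonneg hI1
    -- upper bound on PsiInv
    have hexp_eq : (Real.exp t) ^ (μ - ε)⁻¹ = Real.exp (t * (μ - ε)⁻¹) := by
      rw [Real.rpow_def_of_pos (Real.exp_pos t), Real.log_exp]
    have hSle : S ≤ (Real.exp t) ^ (μ - ε)⁻¹ := by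
      rw [hexp_eq]
      calc S = Real.exp (Real.log S) := (Real.exp_log (by linarith)).symm
        _ ≤ Real.exp (t * (μ - ε)⁻¹) := by
            apply Real.exp_le_exp.2
            calc Real.log S = (μ - ε) * Real.log S * (μ - ε)⁻¹ := by
                  field_simp
              _ ≤ t * (μ - ε)⁻¹ := by
                  apply mul_le_mul_of_nonneg_right htS (by positivity)
    have hIle : PsiInv n ψ (Real.exp t) ≤ Real.exp (t * (μ - ε)⁻¹) := by
      rw [hPsiInv, ← hexp_eq]
      apply Real.sSup_le
      · intro s hs
        have := hS (Real.exp t) s hs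
        rwa [max_eq_right hSle] at this
      · positivity
    have hlogIle : Real.log (PsiInv n ψ (Real.exp t)) ≤ t * (μ - ε)⁻¹ := by
      calc Real.log (PsiInv n ψ (Real.exp t)) ≤ Real.log (Real.exp (t * (μ - ε)⁻¹)) :=
            Real.log_le_log (by linarith) hIle
        _ = t * (μ - ε)⁻¹ := Real.log_exp _
    constructor
    · rw [hh t, le_div_iff₀ ht0]
      have : (1 - (μ - ε)⁻¹) * t = t - t * (μ - ε)⁻¹ := by ring
      linarith
    · rw [hh t, div_le_one ht0]
      linarith
  -- frequent upper bound
  have Fr : ∀ ε : ℝ, 0 < ε → ∃ᶠ t in atTop, h t ≤ 1 - (μ + ε)⁻¹ := by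
    intro ε hε
    have hμε : 0 < μ + ε := by linarith
    rw [frequently_atTop]
    intro T
    obtain ⟨s, hsb, hΦs, hs1⟩ := (frequently_atTop.1 (H2 ε hε))
      (max (Real.exp (T / (μ + ε))) 2)
    have hs2 : (2:ℝ) ≤ s := le_trans (le_max_right _ _) hsb
    have hs0 : 0 < s := by linarith
    have hlogs : 0 < Real.log s := Real.log_pos hs1
    set t : ℝ := (μ + ε) * Real.log s with ht_def
    have ht0 : 0 < t := by positivity
    have htT : T ≤ t := by
      have hse : Real.exp (T / (μ + ε)) ≤ s := le_trans (le_max_left _ _) hsb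
      have : T / (μ + ε) ≤ Real.log s := by
        rw [← Real.log_exp (T / (μ + ε))]
        exact Real.log_le_log (Real.exp_pos _) hse
      rw [ht_def]
      calc T = (μ + ε) * (T / (μ + ε)) := by field_simp
        _ ≤ (μ + ε) * Real.log s := by apply mul_le_mul_of_nonneg_left this hμε.le
    refine ⟨t, htT, ?_⟩
    have hexpt : Real.exp t = s ^ (μ + ε) := by
      rw [ht_def, Real.rpow_def_of_pos hs0]
      ring_nf
    have hsmem : s ∈ {s : ℝ | 0 < s ∧ Φ s ≤ Real.exp t} := by
      refine ⟨hs0, ?_⟩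
      rw [hexpt]; exact hΦs
    have hIs : s ≤ PsiInv n ψ (Real.exp t) := by
      rw [hPsiInv]
      exact le_csSup (hbdd _) hsmem
    have hlogI : Real.log s ≤ Real.log (PsiInv n ψ (Real.exp t)) :=
      Real.log_le_log hs0 hIs
    rw [hh t, div_le_iff₀ ht0]
    have hinv : (μ + ε)⁻¹ * (μ + ε) = 1 := inv_mul_cancel₀ (ne_of_gt hμε)
    have : (1 - (μ + ε)⁻¹) * t = t - Real.log s := by
      rw [ht_def]; linear_combination (-Real.log s) * hinv
    linarith
  -- boundedness facts for h
  obtain ⟨ε₀, hε₀, hε₀μ, hEv₀⟩ : ∃ ε₀ : ℝ, 0 < ε₀ ∧ ε₀ < μ ∧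
      ∀ᶠ t in atTop, 1 - (μ - ε₀)⁻¹ ≤ h t ∧ h t ≤ 1 :=
    ⟨μ/2, by linarith, by linarith, Ev (μ/2) (by linarith) (by linarith)⟩
  have hbddge : IsBoundedUnder (· ≥ ·) atTop h :=
    ⟨1 - (μ - ε₀)⁻¹, by rw [eventually_map]; exact hEv₀.mono fun t ht => ht.1⟩
  have hcobg : IsCoboundedUnder (· ≥ ·) atTop h :=
    isCoboundedUnder_ge_of_eventually_le atTop (hEv₀.mono fun t ht => ht.2)
  -- liminf h ≥ 1 - μ⁻¹
  have hliminf_ge : 1 - μ⁻¹ ≤ liminf h atTop := by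
    by_contra hcon
    push_neg at hcon
    obtain ⟨b, hb1, hb2⟩ := exists_between hcon
    have hb1' : μ⁻¹ < 1 - b := by linarith
    have h1b : 0 < 1 - b := lt_trans (by positivity) hb1'
    have hδ : (1 - b)⁻¹ < μ := by
      rw [← inv_inv μ]
      exact inv_strictAnti₀ (by positivity) hb1'
    have hδ0 : 0 < (1 - b)⁻¹ := by positivity
    have key : 1 - (μ - (μ - (1 - b)⁻¹))⁻¹ ≤ liminf h atTop := by
      apply le_liminf_of_le hcobg
      exact (Ev (μ - (1 - b)⁻¹) (by linarith) (by linarith)).mono fun t ht => ht.1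
    have heq : μ - (μ - (1 - b)⁻¹) = (1 - b)⁻¹ := by ring
    rw [heq, inv_inv] at key
    linarith
  -- liminf h ≤ 1 - μ⁻¹
  have hliminf_le : liminf h atTop ≤ 1 - μ⁻¹ := by
    by_contra hcon
    push_neg at hcon
    have haux : liminf h atTop ≤ 1 - (μ + 1)⁻¹ :=
      liminf_le_of_frequently_le (Fr 1 one_pos) hbddge
    obtain ⟨b, hb1, hb2⟩ := exists_between hcon
    have hb3 : b < 1 := by
      have : (0:ℝ) < (μ + 1)⁻¹ := by positivity
      linarith
    have h1b : 0 < 1 - b := by linarith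
    have h1bμ : 1 - b < μ⁻¹ := by linarith
    have hδ : μ < (1 - b)⁻¹ := by
      rw [← inv_inv μ]
      exact inv_strictAnti₀ h1b h1bμ
    have key : liminf h atTop ≤ 1 - (μ + ((1 - b)⁻¹ - μ))⁻¹ :=
      liminf_le_of_frequently_le (Fr ((1 - b)⁻¹ - μ) (by linarith)) hbddge
    have heq : μ + ((1 - b)⁻¹ - μ) = (1 - b)⁻¹ := by ring
    rw [heq, inv_inv] at key
    linarith
  have hfinal : liminf h atTop = 1 - μ⁻¹ := le_antisymm hliminf_le hliminf_ge
  rw [show liminf (fun t => -(rpsi n ψ t) / t) atTop = liminf h atTop from rfl, hfinal]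
  rw [hμ_def, hc_def]
  have hlamne : lam ≠ 0 := ne_of_gt hlam_pos
  have hnne : (n:ℝ) ≠ 0 := ne_of_gt hn0
  have hn1ne : (n:ℝ) + 1 ≠ 0 := ne_of_gt hn1
  field_simp
  ring
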